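/- arXiv:1911.09097 — 2 statements merged into one kernel-verified Lean document; each statement's English description precedes it below -/
import Mathlib

section
/- The Elko spin sums equal m times (identity plus/minus G(φ)): Σ_{α ∈ {(-,+),(+,-)}} λ^S_α · ¬λ^S_α = m·(1 + G(φ)) and Σ_{α ∈ {(-,+),(+,-)}} λ^A_α · ¬λ^A_α = -m·(1 - G(φ)), as 4×4 complex matrices (outer products of columns with dual rows). In particular the spin sums depend on the azimuthal angle φ, breaking Lorentz covariance. -/
open Matrix Complex

noncomputable section

/-- Pauli matrices -/
def σ1 : Matrix (Fin 2) (Fin 2) ℂ := !![0, 1; 1, 0]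
def σ2 : Matrix (Fin 2) (Fin 2) ℂ := !![0, -I; I, 0]
def σ3 : Matrix (Fin 2) (Fin 2) ℂ := !![1, 0; 0, -1]

/-- Dirac matrices in the Weyl representation, blocks [[0,1],[1,0]], [[0,σk],[-σk,0]] -/
def γ0 : Matrix (Fin 4) (Fin 4) ℂ := !![0,0,1,0; 0,0,0,1; 1,0,0,0; 0,1,0,0]
def γ1 : Matrix (Fin 4) (Fin 4) ℂ := !![0,0,0,1; 0,0,1,0; 0,-1,0,0; -1,0,0,0]
def γ2 : Matrix (Fin 4) (Fin 4) ℂ := !![0,0,0,-I; 0,0,I,0; 0,I,0,0; -I,0,0,0]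
def γ3 : Matrix (Fin 4) (Fin 4) ℂ := !![0,0,1,0; 0,0,0,-1; -1,0,0,0; 0,1,0,0]

/-- the energy E = sqrt(p² + m²) -/
def Ee (m p : ℝ) : ℝ := Real.sqrt (p^2 + m^2)
/-- boost factors B± = sqrt((E+m)/2)(1 ± p/(E+m)) -/
def Bp (m p : ℝ) : ℝ := Real.sqrt ((Ee m p + m)/2) * (1 + p/(Ee m p + m))
def Bm (m p : ℝ) : ℝ := Real.sqrt ((Ee m p + m)/2) * (1 - p/(Ee m p + m))

/-- e^{iφ/2}, e^{-iφ/2}, e^{iφ}, e^{-iφ} -/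
def eP (φ : ℝ) : ℂ := Complex.exp (I * (φ:ℂ) / 2)
def eM (φ : ℝ) : ℂ := Complex.exp (-(I * (φ:ℂ)) / 2)
def ePf (φ : ℝ) : ℂ := Complex.exp (I * (φ:ℂ))
def eMf (φ : ℝ) : ℂ := Complex.exp (-(I * (φ:ℂ)))

/-- boosted Elko spinors -/
def lamS₁ (m p θ φ : ℝ) : Fin 4 → ℂ :=
  ((Bm m p : ℝ) : ℂ) • ![ -I * (Real.sin (θ/2) : ℂ) * eM φ,
                           I * (Real.cos (θ/2) : ℂ) * eP φ,
                           (Real.cos (θ/2) : ℂ) * eM φ,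
                           (Real.sin (θ/2) : ℂ) * eP φ ]

def lamS₂ (m p θ φ : ℝ) : Fin 4 → ℂ :=
  ((Bp m p : ℝ) : ℂ) • ![ I * (Real.cos (θ/2) : ℂ) * eM φ,
                           I * (Real.sin (θ/2) : ℂ) * eP φ,
                           (Real.sin (θ/2) : ℂ) * eM φ,
                           -(Real.cos (θ/2) : ℂ) * eP φ ]

def lamA₁ (m p θ φ : ℝ) : Fin 4 → ℂ :=
  ((Bm m p : ℝ) : ℂ) • ![ I * (Real.sin (θ/2) : ℂ) * eM φ,
                           -I * (Real.cos (θ/2) : ℂ) * eP φ,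
                           (Real.cos (θ/2) : ℂ) * eM φ,
                           (Real.sin (θ/2) : ℂ) * eP φ ]

def lamA₂ (m p θ φ : ℝ) : Fin 4 → ℂ :=
  ((Bp m p : ℝ) : ℂ) • ![ -I * (Real.cos (θ/2) : ℂ) * eM φ,
                           -I * (Real.sin (θ/2) : ℂ) * eP φ,
                           (Real.sin (θ/2) : ℂ) * eM φ,
                           -(Real.cos (θ/2) : ℂ) * eP φ ]

/-- the Ξ(p) operator -/
def Ξop (m p θ φ : ℝ) : Matrix (Fin 4) (Fin 4) ℂ :=
  (1/(m:ℂ)) •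
    !![ I * ((p * Real.sin θ : ℝ) : ℂ),
        -I * ((Ee m p + p * Real.cos θ : ℝ) : ℂ) * eMf φ, 0, 0;
        I * ((Ee m p - p * Real.cos θ : ℝ) : ℂ) * ePf φ,
        -I * ((p * Real.sin θ : ℝ) : ℂ), 0, 0;
        0, 0, -I * ((p * Real.sin θ : ℝ) : ℂ),
        -I * ((Ee m p - p * Real.cos θ : ℝ) : ℂ) * eMf φ;
        0, 0, I * ((Ee m p + p * Real.cos θ : ℝ) : ℂ) * ePf φ,
        I * ((p * Real.sin θ : ℝ) : ℂ) ]

/-- the G(φ) matrix appearing in the Elko spin sums -/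
def Gmat (φ : ℝ) : Matrix (Fin 4) (Fin 4) ℂ :=
  !![0, 0, 0, -I * eMf φ;
     0, 0, I * ePf φ, 0;
     0, -I * eMf φ, 0, 0;
     I * ePf φ, 0, 0, 0]

/-- momentum slash pslash = E γ0 + p sinθ cosφ γ1 + p sinθ sinφ γ2 + p cosθ γ3 -/
def pslash (m p θ φ : ℝ) : Matrix (Fin 4) (Fin 4) ℂ :=
  ((Ee m p : ℝ) : ℂ) • γ0 + ((p * Real.sin θ * Real.cos φ : ℝ) : ℂ) • γ1
    + ((p * Real.sin θ * Real.sin φ : ℝ) : ℂ) • γ2 + ((p * Real.cos θ : ℝ) : ℂ) • γ3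

/-- Elko dual rows ¬λ -/
def dS₁ (m p θ φ : ℝ) : Fin 4 → ℂ := I • Matrix.vecMul (star (lamS₂ m p θ φ)) γ0
def dS₂ (m p θ φ : ℝ) : Fin 4 → ℂ := (-I) • Matrix.vecMul (star (lamS₁ m p θ φ)) γ0
def dA₁ (m p θ φ : ℝ) : Fin 4 → ℂ := I • Matrix.vecMul (star (lamA₂ m p θ φ)) γ0
def dA₂ (m p θ φ : ℝ) : Fin 4 → ℂ := (-I) • Matrix.vecMul (star (lamA₁ m p θ φ)) γ0

end

lemma BB (m p : ℝ) (hm : 0 < m) (hp : 0 ≤ p) : Bm m p * Bp m p = m := by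
  have hE2 : Ee m p ^ 2 = p^2 + m^2 := Real.sq_sqrt (by positivity)
  have hE0 : 0 ≤ Ee m p := Real.sqrt_nonneg _
  have hEm : 0 < Ee m p + m := by linarith
  calc Bm m p * Bp m p
      = (Real.sqrt ((Ee m p + m)/2))^2 * ((1 - p/(Ee m p+m)) * (1 + p/(Ee m p+m))) := by
        unfold Bm Bp; ring
    _ = (Ee m p + m)/2 * ((1 - p/(Ee m p+m)) * (1 + p/(Ee m p+m))) := by
        rw [Real.sq_sqrt (by positivity)]
    _ = m := by field_simp; nlinarith [hE2]

lemma ePM (φ : ℝ) : eP φ * eM φ = 1 := by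
  rw [eP, eM, ← Complex.exp_add]
  rw [show I * (φ:ℂ) / 2 + -(I * (φ:ℂ)) / 2 = 0 by ring, Complex.exp_zero]

lemma eP2 (φ : ℝ) : eP φ ^ 2 = ePf φ := by
  rw [eP, ePf, sq, ← Complex.exp_add]; congr 1; ring

lemma eM2 (φ : ℝ) : eM φ ^ 2 = eMf φ := by
  rw [eM, eMf, sq, ← Complex.exp_add]; congr 1; ring

lemma cP (φ : ℝ) : (starRingEnd ℂ) (eP φ) = eM φ := by
  rw [eP, eM, ← Complex.exp_conj]; congr 1
  simp [Complex.conj_ofReal, map_ofNat]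

lemma cM (φ : ℝ) : (starRingEnd ℂ) (eM φ) = eP φ := by
  rw [eP, eM, ← Complex.exp_conj]; congr 1
  simp [Complex.conj_ofReal, map_ofNat]


lemma one4 : (1 : Matrix (Fin 4) (Fin 4) ℂ) = !![1,0,0,0;0,1,0,0;0,0,1,0;0,0,0,1] := by
  ext i j
  fin_cases i <;> fin_cases j <;> simp [Matrix.one_apply]
  all_goals rfl

@[simp] lemma star_vecCons {n : ℕ} (a : ℂ) (v : Fin n → ℂ) :
    star (Matrix.vecCons a v) = Matrix.vecCons (star a) (star v) := by
  funext i
  refine Fin.cases ?_ (fun j => ?_) i <;> simp [Pi.star_apply]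

set_option maxHeartbeats 2000000 in
/-- The Elko spin sums: Σ_α λ^S_α ¬λ^S_α = m(1 + G(φ)) and Σ_α λ^A_α ¬λ^A_α = -m(1 - G(φ));
in particular the spin sums depend on the azimuthal angle φ, breaking Lorentz covariance. -/
theorem elko_spin_sums (m p θ φ : ℝ) (hm : 0 < m) (hp : 0 ≤ p) :
    Matrix.vecMulVec (lamS₁ m p θ φ) (dS₁ m p θ φ)
      + Matrix.vecMulVec (lamS₂ m p θ φ) (dS₂ m p θ φ)
      = (m : ℂ) • ((1 : Matrix (Fin 4) (Fin 4) ℂ) + Gmat φ) ∧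
    Matrix.vecMulVec (lamA₁ m p θ φ) (dA₁ m p θ φ)
      + Matrix.vecMulVec (lamA₂ m p θ φ) (dA₂ m p θ φ)
      = -((m : ℂ) • ((1 : Matrix (Fin 4) (Fin 4) ℂ) - Gmat φ)) ∧
    (∃ φ₁ φ₂ : ℝ,
      (m : ℂ) • ((1 : Matrix (Fin 4) (Fin 4) ℂ) + Gmat φ₁) ≠
        (m : ℂ) • ((1 : Matrix (Fin 4) (Fin 4) ℂ) + Gmat φ₂)) := by
  have hBBc : ((Bm m p : ℝ) : ℂ) * ((Bp m p : ℝ) : ℂ) = (m : ℂ) := by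
    exact_mod_cast congrArg (Complex.ofReal) (BB m p hm hp)
  have hne : eP φ ≠ 0 := Complex.exp_ne_zero _
  have hMinv : eM φ = (eP φ)⁻¹ := eq_inv_of_mul_eq_one_left (by rw [mul_comm]; exact ePM φ)
  have hc2 : ((Real.cos (θ/2) : ℝ) : ℂ)^2 = 1 - ((Real.sin (θ/2) : ℝ) : ℂ)^2 := by
    have h := Real.sin_sq_add_cos_sq (θ/2)
    have h2 : (Real.cos (θ/2))^2 = 1 - (Real.sin (θ/2))^2 := by nlinarith [h]
    exact_mod_cast h2
  have hc2' : Complex.cos ((θ:ℂ) * (1/2))^2 = 1 - Complex.sin ((θ:ℂ)*(1/2))^2 := by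
    have ha : ((θ:ℂ) * (1/2)) = ((θ/2 : ℝ) : ℂ) := by push_cast; ring
    rw [ha, ← Complex.ofReal_cos, ← Complex.ofReal_sin]; exact hc2
  have hI3 : I^3 = -I := by
    rw [pow_succ, Complex.I_sq]; ring
  have hc2'' : ((Real.cos (θ*(1/2)) : ℝ) : ℂ)^2 = 1 - ((Real.sin (θ*(1/2)) : ℝ) : ℂ)^2 := by
    rw [show θ*(1/2) = θ/2 by ring]; exact hc2
  refine ⟨?_, ?_, ?_⟩
  · ext i j
    fin_cases i <;> fin_cases j <;>
      · simp only [Matrix.vecMulVec_apply, Matrix.add_apply, Matrix.smul_apply, one4,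
          lamS₁, lamS₂, dS₁, dS₂, γ0, Gmat, Matrix.vecMul, dotProduct, Fin.sum_univ_four,
          Pi.smul_apply, smul_eq_mul, star_vecCons, star_smul, Pi.star_apply, star_trivial,
          Matrix.head_fin_const, Matrix.head_cons, Matrix.tail_cons,
          Matrix.cons_val_zero, Matrix.cons_val_one, Matrix.cons_val_two, Matrix.cons_val_three,
          Matrix.cons_val', Matrix.empty_val', Matrix.cons_val_fin_one, Matrix.of_apply,
          star_mul', star_neg, RCLike.star_def, _root_.map_mul, map_neg, Complex.conj_I,
          Complex.conj_ofReal, cP, cM, mul_zero, zero_mul, add_zero, zero_add, mul_one, one_mul,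
          neg_mul, mul_neg, neg_neg, reduceIte, Matrix.neg_apply, Matrix.sub_apply,
          Fin.zero_eta, Fin.mk_one, Fin.isValue, Fin.reduceFinMk, Matrix.cons_val]
        try simp only [← hBBc, ← eP2 φ, ← eM2 φ, hMinv]
        try field_simp
        try ring_nf
        try simp only [hc2, hc2', hc2'', Complex.I_sq, hI3]
        try ring
  · ext i j
    fin_cases i <;> fin_cases j <;>
      · simp only [Matrix.vecMulVec_apply, Matrix.add_apply, Matrix.smul_apply, one4,
          lamA₁, lamA₂, dA₁, dA₂, γ0, Gmat, Matrix.vecMul, dotProduct, Fin.sum_univ_four,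
          Pi.smul_apply, smul_eq_mul, star_vecCons, star_smul, Pi.star_apply, star_trivial,
          Matrix.head_fin_const, Matrix.head_cons, Matrix.tail_cons,
          Matrix.cons_val_zero, Matrix.cons_val_one, Matrix.cons_val_two, Matrix.cons_val_three,
          Matrix.cons_val', Matrix.empty_val', Matrix.cons_val_fin_one, Matrix.of_apply,
          star_mul', star_neg, RCLike.star_def, _root_.map_mul, map_neg, Complex.conj_I,
          Complex.conj_ofReal, cP, cM, mul_zero, zero_mul, add_zero, zero_add, mul_one, one_mul,
          neg_mul, mul_neg, neg_neg, reduceIte, Matrix.neg_apply, Matrix.sub_apply,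
          Fin.zero_eta, Fin.mk_one, Fin.isValue, Fin.reduceFinMk, Matrix.cons_val]
        try simp only [← hBBc, ← eP2 φ, ← eM2 φ, hMinv]
        try field_simp
        try ring_nf
        try simp only [hc2, hc2', hc2'', Complex.I_sq, hI3]
        try ring
  · refine ⟨0, Real.pi, fun h => ?_⟩
    have h2 := congrFun (congrFun h 3) 0
    simp [Gmat, Matrix.one_apply, ePf, Matrix.smul_apply, Matrix.add_apply,
      Complex.ext_iff, mul_comm I, Complex.exp_pi_mul_I] at h2
    linarith
end

section
/- For the boosted Elko spinor λ = λ^S_{-,+} and its dual row d, the Elko bilinear forms take the values: σ = d·λ = -2m; ω = -d·(γ0γ1γ2γ3)·λ = 0; J₀ = d·γ0·λ = 0, J₁ = d·γ1·λ = 2im·cosθ·cosφ, J₂ = d·γ2·λ = 2im·cosθ·sinφ, J₃ = d·γ3·λ = -2im·sinθ; K₀ = i·d·(γ0γ1γ2γ3)·γ0·λ = 0, K₁ = i·d·(γ0γ1γ2γ3)·γ1·λ = -2m·sinφ, K₂ = i·d·(γ0γ1γ2γ3)·γ2·λ = 2m·cosφ, K₃ = i·d·(γ0γ1γ2γ3)·γ3·λ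 = 0; S₀₁ = i·d·γ0γ1·λ = -2im·sinθ·cosφ, S₀₂ = i·d·γ0γ2·λ = -2im·sinθ·sinφ, S₀₃ = i·d·γ0γ3·λ = -2im·cosθ, and S₁₂ = i·d·γ1γ2·λ = S₁₃ = i·d·γ1γ3·λ = S₂₃ = i·d·γ2γ3·λ = 0. In particular σ and the K_μ are real while the nonzero J_μ and S_{0k} are purely imaginary. -/
open Matrix Complex

/-- the dual row d = B₊·(-i·s·e^{iφ/2}, i·c·e^{-iφ/2}, -c·e^{iφ/2}, -s·e^{-iφ/2}) -/
noncomputable def dRow (m p θ φ : ℝ) : Fin 4 → ℂ :=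
  ((Bp m p : ℝ) : ℂ) • ![ -I * (Real.sin (θ/2) : ℂ) * eP φ,
                           I * (Real.cos (θ/2) : ℂ) * eM φ,
                           -(Real.cos (θ/2) : ℂ) * eP φ,
                           -(Real.sin (θ/2) : ℂ) * eM φ ]

/-- the bilinear d·M·λ -/
noncomputable def bil (m p θ φ : ℝ) (M : Matrix (Fin 4) (Fin 4) ℂ) : ℂ :=
  dotProduct (dRow m p θ φ) (M.mulVec (lamS₁ m p θ φ))

theorem mul_fin_four {α} [AddCommMonoid α] [Mul α]
    (a₁₁ a₁₂ a₁₃ a₁₄ a₂₁ a₂₂ a₂₃ a₂₄ a₃₁ a₃₂ a₃₃ a₃₄ a₄₁ a₄₂ a₄₃ a₄₄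
     b₁₁ b₁₂ b₁₃ b₁₄ b₂₁ b₂₂ b₂₃ b₂₄ b₃₁ b₃₂ b₃₃ b₃₄ b₄₁ b₄₂ b₄₃ b₄₄ : α) :
    !![a₁₁, a₁₂, a₁₃, a₁₄; a₂₁, a₂₂, a₂₃, a₂₄; a₃₁, a₃₂, a₃₃, a₃₄; a₄₁, a₄₂, a₄₃, a₄₄] *
    !![b₁₁, b₁₂, b₁₃, b₁₄; b₂₁, b₂₂, b₂₃, b₂₄; b₃₁, b₃₂, b₃₃, b₃₄; b₄₁, b₄₂, b₄₃, b₄₄] =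
    !![a₁₁*b₁₁ + a₁₂*b₂₁ + a₁₃*b₃₁ + a₁₄*b₄₁, a₁₁*b₁₂ + a₁₂*b₂₂ + a₁₃*b₃₂ + a₁₄*b₄₂,
       a₁₁*b₁₃ + a₁₂*b₂₃ + a₁₃*b₃₃ + a₁₄*b₄₃, a₁₁*b₁₄ + a₁₂*b₂₄ + a₁₃*b₃₄ + a₁₄*b₄₄;
       a₂₁*b₁₁ + a₂₂*b₂₁ + a₂₃*b₃₁ + a₂₄*b₄₁, a₂₁*b₁₂ + a₂₂*b₂₂ + a₂₃*b₃₂ + a₂₄*b₄₂,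
       a₂₁*b₁₃ + a₂₂*b₂₃ + a₂₃*b₃₃ + a₂₄*b₄₃, a₂₁*b₁₄ + a₂₂*b₂₄ + a₂₃*b₃₄ + a₂₄*b₄₄;
       a₃₁*b₁₁ + a₃₂*b₂₁ + a₃₃*b₃₁ + a₃₄*b₄₁, a₃₁*b₁₂ + a₃₂*b₂₂ + a₃₃*b₃₂ + a₃₄*b₄₂,
       a₃₁*b₁₃ + a₃₂*b₂₃ + a₃₃*b₃₃ + a₃₄*b₄₃, a₃₁*b₁₄ + a₃₂*b₂₄ + a₃₃*b₃₄ + a₃₄*b₄₄;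
       a₄₁*b₁₁ + a₄₂*b₂₁ + a₄₃*b₃₁ + a₄₄*b₄₁, a₄₁*b₁₂ + a₄₂*b₂₂ + a₄₃*b₃₂ + a₄₄*b₄₂,
       a₄₁*b₁₃ + a₄₂*b₂₃ + a₄₃*b₃₃ + a₄₄*b₄₃, a₄₁*b₁₄ + a₄₂*b₂₄ + a₄₃*b₃₄ + a₄₄*b₄₄] := by
  ext i j
  fin_cases i <;> fin_cases j
    <;> simp [Matrix.mul_apply, Fin.sum_univ_succ, ← add_assoc]

lemma lit_g5 : γ0 * γ1 * γ2 * γ3 = !![I, 0, 0, 0; 0, I, 0, 0; 0, 0, -I, 0; 0, 0, 0, -I] := by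
  simp only [γ0, γ1, γ2, γ3]
  norm_num [mul_fin_four, Complex.I_mul_I]

lemma lit_g50 : γ0 * γ1 * γ2 * γ3 * γ0 = !![0, 0, I, 0; 0, 0, 0, I; -I, 0, 0, 0; 0, -I, 0, 0] := by
  simp only [γ0, γ1, γ2, γ3]
  norm_num [mul_fin_four, Complex.I_mul_I]

lemma lit_g51 : γ0 * γ1 * γ2 * γ3 * γ1 = !![0, 0, 0, I; 0, 0, I, 0; 0, I, 0, 0; I, 0, 0, 0] := by
  simp only [γ0, γ1, γ2, γ3]
  norm_num [mul_fin_four, Complex.I_mul_I]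

lemma lit_g52 : γ0 * γ1 * γ2 * γ3 * γ2 = !![0, 0, 0, 1; 0, 0, -1, 0; 0, 1, 0, 0; -1, 0, 0, 0] := by
  simp only [γ0, γ1, γ2, γ3]
  norm_num [mul_fin_four, Complex.I_mul_I]

lemma lit_g53 : γ0 * γ1 * γ2 * γ3 * γ3 = !![0, 0, I, 0; 0, 0, 0, -I; I, 0, 0, 0; 0, -I, 0, 0] := by
  simp only [γ0, γ1, γ2, γ3]
  norm_num [mul_fin_four, Complex.I_mul_I]

lemma lit_g01 : γ0 * γ1 = !![0, -1, 0, 0; -1, 0, 0, 0; 0, 0, 0, 1; 0, 0, 1, 0] := by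
  simp only [γ0, γ1, γ2, γ3]
  norm_num [mul_fin_four, Complex.I_mul_I]

lemma lit_g02 : γ0 * γ2 = !![0, I, 0, 0; -I, 0, 0, 0; 0, 0, 0, -I; 0, 0, I, 0] := by
  simp only [γ0, γ1, γ2, γ3]
  norm_num [mul_fin_four, Complex.I_mul_I]

lemma lit_g03 : γ0 * γ3 = !![-1, 0, 0, 0; 0, 1, 0, 0; 0, 0, 1, 0; 0, 0, 0, -1] := by
  simp only [γ0, γ1, γ2, γ3]
  norm_num [mul_fin_four, Complex.I_mul_I]

lemma lit_g12 : γ1 * γ2 = !![-I, 0, 0, 0; 0, I, 0, 0; 0, 0, -I, 0; 0, 0, 0, I] := by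
  simp only [γ0, γ1, γ2, γ3]
  norm_num [mul_fin_four, Complex.I_mul_I]

lemma lit_g13 : γ1 * γ3 = !![0, 1, 0, 0; -1, 0, 0, 0; 0, 0, 0, 1; 0, 0, -1, 0] := by
  simp only [γ0, γ1, γ2, γ3]
  norm_num [mul_fin_four, Complex.I_mul_I]

lemma lit_g23 : γ2 * γ3 = !![0, -I, 0, 0; -I, 0, 0, 0; 0, 0, 0, -I; 0, 0, -I, 0] := by
  simp only [γ0, γ1, γ2, γ3]
  norm_num [mul_fin_four, Complex.I_mul_I]

lemma lit_one : (1 : Matrix (Fin 4) (Fin 4) ℂ) = !![1,0,0,0; 0,1,0,0; 0,0,1,0; 0,0,0,1] := by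
  ext i j; fin_cases i <;> fin_cases j <;> simp [Matrix.one_apply, Matrix.vecHead, Matrix.vecTail]

set_option maxHeartbeats 1600000 in
set_option maxRecDepth 10000 in
/-- The Elko bilinear forms for λ = λ^S_{-,+}: σ and the K_μ are real while the nonzero
J_μ and S_{0k} are purely imaginary. -/
theorem elko_bilinear_forms (m p θ φ : ℝ) (hm : 0 < m) (hp : 0 ≤ p) :
    bil m p θ φ 1 = -(2 * (m : ℂ)) ∧
    -(bil m p θ φ (γ0 * γ1 * γ2 * γ3)) = 0 ∧
    bil m p θ φ γ0 = 0 ∧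
    bil m p θ φ γ1 = 2 * I * (m : ℂ) * (Real.cos θ : ℂ) * (Real.cos φ : ℂ) ∧
    bil m p θ φ γ2 = 2 * I * (m : ℂ) * (Real.cos θ : ℂ) * (Real.sin φ : ℂ) ∧
    bil m p θ φ γ3 = -(2 * I * (m : ℂ) * (Real.sin θ : ℂ)) ∧
    I * bil m p θ φ (γ0 * γ1 * γ2 * γ3 * γ0) = 0 ∧
    I * bil m p θ φ (γ0 * γ1 * γ2 * γ3 * γ1) = -(2 * (m : ℂ) * (Real.sin φ : ℂ)) ∧
    I * bil m p θ φ (γ0 * γ1 * γ2 * γ3 * γ2) = 2 * (m : ℂ) * (Real.cos φ : ℂ) ∧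
    I * bil m p θ φ (γ0 * γ1 * γ2 * γ3 * γ3) = 0 ∧
    I * bil m p θ φ (γ0 * γ1) = -(2 * I * (m : ℂ) * (Real.sin θ : ℂ) * (Real.cos φ : ℂ)) ∧
    I * bil m p θ φ (γ0 * γ2) = -(2 * I * (m : ℂ) * (Real.sin θ : ℂ) * (Real.sin φ : ℂ)) ∧
    I * bil m p θ φ (γ0 * γ3) = -(2 * I * (m : ℂ) * (Real.cos θ : ℂ)) ∧
    I * bil m p θ φ (γ1 * γ2) = 0 ∧
    I * bil m p θ φ (γ1 * γ3) = 0 ∧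
    I * bil m p θ φ (γ2 * γ3) = 0 := by
  have hE : Ee m p ^ 2 = p^2 + m^2 := Real.sq_sqrt (by positivity)
  have hE0 : 0 ≤ Ee m p := Real.sqrt_nonneg _
  have hEm : (0:ℝ) < Ee m p + m := by linarith
  have hBBr : Bm m p * Bp m p = m := by
    rw [Bm, Bp, mul_mul_mul_comm, Real.mul_self_sqrt (by positivity : (0:ℝ) ≤ (Ee m p + m)/2)]
    have hne : Ee m p + m ≠ 0 := ne_of_gt hEm
    field_simp
    nlinarith [hE]
  have hBB : ((Bm m p : ℝ) : ℂ) * ((Bp m p : ℝ) : ℂ) = (m : ℂ) := by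
    exact_mod_cast congrArg (fun x : ℝ => (x : ℂ)) hBBr
  have hI : (I:ℂ)^2 = -1 := Complex.I_sq
  have h1 : (Real.sin (θ/2) : ℂ)^2 + (Real.cos (θ/2) : ℂ)^2 = 1 := by
    exact_mod_cast congrArg (fun x : ℝ => (x : ℂ)) (Real.sin_sq_add_cos_sq (θ/2))
  have hctr : Real.cos θ = Real.cos (θ/2)^2 - Real.sin (θ/2)^2 := by
    have h2 := Real.cos_two_mul (θ/2)
    have h3 := Real.sin_sq_add_cos_sq (θ/2)
    rw [show 2*(θ/2) = θ by ring] at h2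
    linarith
  have hct : (Real.cos θ : ℂ) = (Real.cos (θ/2) : ℂ)^2 - (Real.sin (θ/2) : ℂ)^2 := by
    exact_mod_cast congrArg (fun x : ℝ => (x : ℂ)) hctr
  have hstr : Real.sin θ = 2 * Real.sin (θ/2) * Real.cos (θ/2) := by
    have h2 := Real.sin_two_mul (θ/2)
    rw [show 2*(θ/2) = θ by ring] at h2
    linarith
  have hst : (Real.sin θ : ℂ) = 2 * (Real.sin (θ/2) : ℂ) * (Real.cos (θ/2) : ℂ) := by
    exact_mod_cast congrArg (fun x : ℝ => (x : ℂ)) hstr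
  have hep : eP φ ^ 2 = (Real.cos φ : ℂ) + (Real.sin φ : ℂ) * I := by
    rw [Complex.ofReal_cos, Complex.ofReal_sin, ← Complex.exp_mul_I, eP, sq, ← Complex.exp_add]
    congr 1; ring
  have hem : eM φ ^ 2 = (Real.cos φ : ℂ) - (Real.sin φ : ℂ) * I := by
    have h := Complex.exp_mul_I (-(φ:ℂ))
    rw [Complex.cos_neg, Complex.sin_neg] at h
    rw [eM, sq, ← Complex.exp_add, show -(I*(φ:ℂ))/2 + -(I*(φ:ℂ))/2 = -(φ:ℂ)*I by ring, h,
      Complex.ofReal_cos, Complex.ofReal_sin]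
    ring
  have hcf : (Real.cos φ : ℂ) = (eP φ^2 + eM φ^2)/2 := by
    linear_combination (-1/2 : ℂ) * hep + (-1/2 : ℂ) * hem
  have hsf : (Real.sin φ : ℂ) = -(I * (eP φ^2 - eM φ^2))/2 := by
    linear_combination (I/2) * hep - (I/2) * hem + (Real.sin φ : ℂ) * hI
  have hpm : eP φ * eM φ = 1 := by
    rw [eP, eM, ← Complex.exp_add, show I*(φ:ℂ)/2 + -(I*(φ:ℂ))/2 = 0 by ring, Complex.exp_zero]
  refine ⟨?_, ?_, ?_, ?_, ?_, ?_, ?_, ?_, ?_, ?_, ?_, ?_, ?_, ?_, ?_, ?_⟩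
  · -- sig
    rw [lit_one]
    simp [bil, dRow, lamS₁, γ0, γ1, γ2, γ3, Matrix.mulVec, dotProduct,
      Fin.sum_univ_four, Matrix.vecHead, Matrix.vecTail, smul_eq_mul,
      -Complex.ofReal_sin, -Complex.ofReal_cos]
    linear_combination ((Real.cos (θ/2) : ℂ)^2 * eP φ * eM φ * ((Bm m p : ℝ) : ℂ) * ((Bp m p : ℝ) : ℂ) + (Real.sin (θ/2) : ℂ)^2 * eP φ * eM φ * ((Bm m p : ℝ) : ℂ) * ((Bp m p : ℝ) : ℂ)) * hI + (-(2 : ℂ) * eP φ * eM φ * ((Bm m p : ℝ) : ℂ) * ((Bp m p : ℝ) : ℂ)) * h1 + (-(2 : ℂ) * ((Bm m p : ℝ) : ℂ) * ((Bp m p : ℝ) : ℂ)) * hpm + (-(2 : ℂ)) * hBB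
  · -- omega
    rw [lit_g5]
    simp [bil, dRow, lamS₁, γ0, γ1, γ2, γ3, Matrix.mulVec, dotProduct,
      Fin.sum_univ_four, Matrix.vecHead, Matrix.vecTail, smul_eq_mul,
      -Complex.ofReal_sin, -Complex.ofReal_cos]
    linear_combination (-I * (Real.cos (θ/2) : ℂ)^2 * eP φ * eM φ * ((Bm m p : ℝ) : ℂ) * ((Bp m p : ℝ) : ℂ) - I * (Real.sin (θ/2) : ℂ)^2 * eP φ * eM φ * ((Bm m p : ℝ) : ℂ) * ((Bp m p : ℝ) : ℂ)) * hI
  · -- J0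
    simp [bil, dRow, lamS₁, γ0, γ1, γ2, γ3, Matrix.mulVec, dotProduct,
      Fin.sum_univ_four, Matrix.vecHead, Matrix.vecTail, smul_eq_mul,
      -Complex.ofReal_sin, -Complex.ofReal_cos]
    ring
  · -- J1
    simp [bil, dRow, lamS₁, γ0, γ1, γ2, γ3, Matrix.mulVec, dotProduct,
      Fin.sum_univ_four, Matrix.vecHead, Matrix.vecTail, smul_eq_mul,
      -Complex.ofReal_sin, -Complex.ofReal_cos]
    linear_combination (-(2 : ℂ) * (Real.cos φ : ℂ) * I * (m : ℂ)) * hct + (-(2 : ℂ) * I * (Real.cos (θ/2) : ℂ)^2 * (m : ℂ) + (2 : ℂ) * I * (Real.sin (θ/2) : ℂ)^2 * (m : ℂ)) * hcf + (I * eM φ^2 * (m : ℂ) - I * eM φ^2 * ((Bm m p : ℝ) : ℂ) * ((Bp m p : ℝ) : ℂ) + I * eP φ^2 * (m : ℂ) - I * eP φ^2 * ((Bm m p : ℝ) : ℂ) * ((Bp m p : ℝ) : ℂ)) * h1 + (-I * eM φ^2 - I * eP φ^2 + (2 : ℂ) * I * (Real.cos (θ/2) : ℂ)^2 * eM φ^2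 + (2 : ℂ) * I * (Real.cos (θ/2) : ℂ)^2 * eP φ^2) * hBB
  · -- J2
    simp [bil, dRow, lamS₁, γ0, γ1, γ2, γ3, Matrix.mulVec, dotProduct,
      Fin.sum_univ_four, Matrix.vecHead, Matrix.vecTail, smul_eq_mul,
      -Complex.ofReal_sin, -Complex.ofReal_cos]
    linear_combination (-(2 : ℂ) * (Real.sin φ : ℂ) * I * (m : ℂ)) * hct + (-(2 : ℂ) * I * (Real.cos (θ/2) : ℂ)^2 * (m : ℂ) + (2 : ℂ) * I * (Real.sin (θ/2) : ℂ)^2 * (m : ℂ)) * hsf + (-(Real.cos (θ/2) : ℂ)^2 * eM φ^2 * (m : ℂ) + (Real.cos (θ/2) : ℂ)^2 * eM φ^2 * ((Bm m p : ℝ) : ℂ) * ((Bp m p : ℝ) : ℂ) + (Real.cos (θ/2) : ℂ)^2 * eP φ^2 * (m : ℂ) - (Real.cos (θ/2) : ℂ)^2 * eP φ^2 * ((Bm m p : ℝ) : ℂ) * ((Bp m p : ℝ) : ℂ) + (Real.sin (θ/2) : ℂ)^2 * eM φ^2 * (m : ℂ) - (Real.sin (θ/2) : ℂ)^2 * eM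 φ^2 * ((Bm m p : ℝ) : ℂ) * ((Bp m p : ℝ) : ℂ) - (Real.sin (θ/2) : ℂ)^2 * eP φ^2 * (m : ℂ) + (Real.sin (θ/2) : ℂ)^2 * eP φ^2 * ((Bm m p : ℝ) : ℂ) * ((Bp m p : ℝ) : ℂ)) * hI + (-eM φ^2 * (m : ℂ) + eM φ^2 * ((Bm m p : ℝ) : ℂ) * ((Bp m p : ℝ) : ℂ) + eP φ^2 * (m : ℂ) - eP φ^2 * ((Bm m p : ℝ) : ℂ) * ((Bp m p : ℝ) : ℂ)) * h1 + (eM φ^2 - eP φ^2 - (2 : ℂ) * (Real.cos (θ/2) : ℂ)^2 * eM φ^2 + (2 : ℂ) * (Real.cos (θ/2) : ℂ)^2 * eP φ^2) * hBB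
  · -- J3
    simp [bil, dRow, lamS₁, γ0, γ1, γ2, γ3, Matrix.mulVec, dotProduct,
      Fin.sum_univ_four, Matrix.vecHead, Matrix.vecTail, smul_eq_mul,
      -Complex.ofReal_sin, -Complex.ofReal_cos]
    linear_combination ((2 : ℂ) * I * (m : ℂ)) * hst + (-(4 : ℂ) * I * (Real.sin (θ/2) : ℂ) * (Real.cos (θ/2) : ℂ) * ((Bm m p : ℝ) : ℂ) * ((Bp m p : ℝ) : ℂ)) * hpm + (-(4 : ℂ) * I * (Real.sin (θ/2) : ℂ) * (Real.cos (θ/2) : ℂ)) * hBB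
  · -- K0
    rw [lit_g50]
    simp [bil, dRow, lamS₁, γ0, γ1, γ2, γ3, Matrix.mulVec, dotProduct,
      Fin.sum_univ_four, Matrix.vecHead, Matrix.vecTail, smul_eq_mul,
      -Complex.ofReal_sin, -Complex.ofReal_cos]
    ring
  · -- K1
    rw [lit_g51]
    simp [bil, dRow, lamS₁, γ0, γ1, γ2, γ3, Matrix.mulVec, dotProduct,
      Fin.sum_univ_four, Matrix.vecHead, Matrix.vecTail, smul_eq_mul,
      -Complex.ofReal_sin, -Complex.ofReal_cos]
    linear_combination ((2 : ℂ) * (m : ℂ)) * hsf + (I * (Real.cos (θ/2) : ℂ)^2 * eM φ^2 * ((Bm m p : ℝ) : ℂ) * ((Bp m p : ℝ) : ℂ) - I * (Real.cos (θ/2) : ℂ)^2 * eP φ^2 * ((Bm m p : ℝ) : ℂ) * ((Bp m p : ℝ) : ℂ) + I * (Real.sin (θ/2) : ℂ)^2 * eM φ^2 * ((Bm m p : ℝ) : ℂ) * ((Bp m p : ℝ) : ℂ) - I * (Real.sin (θ/2) : ℂ)^2 * eP φ^2 * ((Bm m p : ℝ) : ℂ) * ((Bp m p : ℝ) : ℂ))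 * hI + (-I * eM φ^2 * ((Bm m p : ℝ) : ℂ) * ((Bp m p : ℝ) : ℂ) + I * eP φ^2 * ((Bm m p : ℝ) : ℂ) * ((Bp m p : ℝ) : ℂ)) * h1 + (-I * eM φ^2 + I * eP φ^2) * hBB
  · -- K2
    rw [lit_g52]
    simp [bil, dRow, lamS₁, γ0, γ1, γ2, γ3, Matrix.mulVec, dotProduct,
      Fin.sum_univ_four, Matrix.vecHead, Matrix.vecTail, smul_eq_mul,
      -Complex.ofReal_sin, -Complex.ofReal_cos]
    linear_combination (-(2 : ℂ) * (m : ℂ)) * hcf + (-(Real.cos (θ/2) : ℂ)^2 * eM φ^2 * ((Bm m p : ℝ) : ℂ) * ((Bp m p : ℝ) : ℂ) - (Real.cos (θ/2) : ℂ)^2 * eP φ^2 * ((Bm m p : ℝ) : ℂ) * ((Bp m p : ℝ) : ℂ) - (Real.sin (θ/2) : ℂ)^2 * eM φ^2 * ((Bm m p : ℝ) : ℂ) * ((Bp m p : ℝ) : ℂ) - (Real.sin (θ/2) : ℂ)^2 * eP φ^2 * ((Bm m p : ℝ) : ℂ) * ((Bp m p : ℝ) : ℂ)) * hI + (eM φ^2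 * ((Bm m p : ℝ) : ℂ) * ((Bp m p : ℝ) : ℂ) + eP φ^2 * ((Bm m p : ℝ) : ℂ) * ((Bp m p : ℝ) : ℂ)) * h1 + (eM φ^2 + eP φ^2) * hBB
  · -- K3
    rw [lit_g53]
    simp [bil, dRow, lamS₁, γ0, γ1, γ2, γ3, Matrix.mulVec, dotProduct,
      Fin.sum_univ_four, Matrix.vecHead, Matrix.vecTail, smul_eq_mul,
      -Complex.ofReal_sin, -Complex.ofReal_cos]
    ring
  · -- S01
    rw [lit_g01]
    simp [bil, dRow, lamS₁, γ0, γ1, γ2, γ3, Matrix.mulVec, dotProduct,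
      Fin.sum_univ_four, Matrix.vecHead, Matrix.vecTail, smul_eq_mul,
      -Complex.ofReal_sin, -Complex.ofReal_cos]
    linear_combination ((2 : ℂ) * (Real.cos φ : ℂ) * I * (m : ℂ)) * hst + ((4 : ℂ) * I * (Real.sin (θ/2) : ℂ) * (Real.cos (θ/2) : ℂ) * (m : ℂ)) * hcf + (I * (Real.sin (θ/2) : ℂ) * (Real.cos (θ/2) : ℂ) * eM φ^2 * ((Bm m p : ℝ) : ℂ) * ((Bp m p : ℝ) : ℂ) + I * (Real.sin (θ/2) : ℂ) * (Real.cos (θ/2) : ℂ) * eP φ^2 * ((Bm m p : ℝ) : ℂ) * ((Bp m p : ℝ) : ℂ)) * hI + (-(2 : ℂ) * I * (Real.sin (θ/2) : ℂ) * (Real.cos (θ/2) : ℂ) * eM φ^2 - (2 : ℂ) * I * (Real.sin (θ/2) : ℂ) * (Real.cos (θ/2) : ℂ) * eP φ^2) * hBB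
  · -- S02
    rw [lit_g02]
    simp [bil, dRow, lamS₁, γ0, γ1, γ2, γ3, Matrix.mulVec, dotProduct,
      Fin.sum_univ_four, Matrix.vecHead, Matrix.vecTail, smul_eq_mul,
      -Complex.ofReal_sin, -Complex.ofReal_cos]
    linear_combination ((2 : ℂ) * (Real.sin φ : ℂ) * I * (m : ℂ)) * hst + ((4 : ℂ) * I * (Real.sin (θ/2) : ℂ) * (Real.cos (θ/2) : ℂ) * (m : ℂ)) * hsf + ((2 : ℂ) * (Real.sin (θ/2) : ℂ) * (Real.cos (θ/2) : ℂ) * eM φ^2 * (m : ℂ) - (2 : ℂ) * (Real.sin (θ/2) : ℂ) * (Real.cos (θ/2) : ℂ) * eM φ^2 * ((Bm m p : ℝ) : ℂ) * ((Bp m p : ℝ) : ℂ) - (2 : ℂ) * (Real.sin (θ/2) : ℂ) * (Real.cos (θ/2) : ℂ) * eP φ^2 * (m : ℂ) + (2 : ℂ) * (Real.sin (θ/2) : ℂ) * (Real.cos (θ/2) : ℂ) * eP φ^2 * ((Bm m p : ℝ) : ℂ) * ((Bp m p : ℝ) : ℂ) + I^2 * (Real.sin (θ/2) : ℂ) * (Real.cos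 (θ/2) : ℂ) * eM φ^2 * ((Bm m p : ℝ) : ℂ) * ((Bp m p : ℝ) : ℂ) - I^2 * (Real.sin (θ/2) : ℂ) * (Real.cos (θ/2) : ℂ) * eP φ^2 * ((Bm m p : ℝ) : ℂ) * ((Bp m p : ℝ) : ℂ)) * hI + ((2 : ℂ) * (Real.sin (θ/2) : ℂ) * (Real.cos (θ/2) : ℂ) * eM φ^2 - (2 : ℂ) * (Real.sin (θ/2) : ℂ) * (Real.cos (θ/2) : ℂ) * eP φ^2) * hBB
  · -- S03
    rw [lit_g03]
    simp [bil, dRow, lamS₁, γ0, γ1, γ2, γ3, Matrix.mulVec, dotProduct,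
      Fin.sum_univ_four, Matrix.vecHead, Matrix.vecTail, smul_eq_mul,
      -Complex.ofReal_sin, -Complex.ofReal_cos]
    linear_combination ((2 : ℂ) * I * (m : ℂ)) * hct + (I * (Real.cos (θ/2) : ℂ)^2 * eP φ * eM φ * ((Bm m p : ℝ) : ℂ) * ((Bp m p : ℝ) : ℂ) - I * (Real.sin (θ/2) : ℂ)^2 * eP φ * eM φ * ((Bm m p : ℝ) : ℂ) * ((Bp m p : ℝ) : ℂ)) * hI + (-(2 : ℂ) * I * (m : ℂ) + (2 : ℂ) * I * eP φ * eM φ * ((Bm m p : ℝ) : ℂ) * ((Bp m p : ℝ) : ℂ)) * h1 + ((2 : ℂ) * I * ((Bm m p : ℝ) : ℂ) * ((Bp m p : ℝ) : ℂ) - (4 : ℂ) * I * (Real.cos (θ/2) : ℂ)^2 * ((Bm m p : ℝ) : ℂ) * ((Bp m p : ℝ) : ℂ)) * hpm + ((2 : ℂ) * I - (4 : ℂ) * I * (Real.cos (θ/2) : ℂ)^2) * hBB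
  · -- S12
    rw [lit_g12]
    simp [bil, dRow, lamS₁, γ0, γ1, γ2, γ3, Matrix.mulVec, dotProduct,
      Fin.sum_univ_four, Matrix.vecHead, Matrix.vecTail, smul_eq_mul,
      -Complex.ofReal_sin, -Complex.ofReal_cos]
    linear_combination (I^2 * (Real.cos (θ/2) : ℂ)^2 * eP φ * eM φ * ((Bm m p : ℝ) : ℂ) * ((Bp m p : ℝ) : ℂ) - I^2 * (Real.sin (θ/2) : ℂ)^2 * eP φ * eM φ * ((Bm m p : ℝ) : ℂ) * ((Bp m p : ℝ) : ℂ)) * hI + (((Real.sin (θ/2) : ℂ)^2 - (Real.cos (θ/2) : ℂ)^2) * eP φ * eM φ * ((Bm m p : ℝ) : ℂ) * ((Bp m p : ℝ) : ℂ) * (I^2 - I)) * hI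
  · -- S13
    rw [lit_g13]
    simp [bil, dRow, lamS₁, γ0, γ1, γ2, γ3, Matrix.mulVec, dotProduct,
      Fin.sum_univ_four, Matrix.vecHead, Matrix.vecTail, smul_eq_mul,
      -Complex.ofReal_sin, -Complex.ofReal_cos]
    linear_combination (I * (Real.sin (θ/2) : ℂ) * (Real.cos (θ/2) : ℂ) * eM φ^2 * ((Bm m p : ℝ) : ℂ) * ((Bp m p : ℝ) : ℂ) - I * (Real.sin (θ/2) : ℂ) * (Real.cos (θ/2) : ℂ) * eP φ^2 * ((Bm m p : ℝ) : ℂ) * ((Bp m p : ℝ) : ℂ)) * hI + ((Real.sin (θ/2) : ℂ) * (Real.cos (θ/2) : ℂ) * (eP φ^2 - eM φ^2) * ((Bm m p : ℝ) : ℂ) * ((Bp m p : ℝ) : ℂ) * (I - 1)) * hI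
  · -- S23
    rw [lit_g23]
    simp [bil, dRow, lamS₁, γ0, γ1, γ2, γ3, Matrix.mulVec, dotProduct,
      Fin.sum_univ_four, Matrix.vecHead, Matrix.vecTail, smul_eq_mul,
      -Complex.ofReal_sin, -Complex.ofReal_cos]
    linear_combination (I^2 * (Real.sin (θ/2) : ℂ) * (Real.cos (θ/2) : ℂ) * eM φ^2 * ((Bm m p : ℝ) : ℂ) * ((Bp m p : ℝ) : ℂ) + I^2 * (Real.sin (θ/2) : ℂ) * (Real.cos (θ/2) : ℂ) * eP φ^2 * ((Bm m p : ℝ) : ℂ) * ((Bp m p : ℝ) : ℂ)) * hI + ((Real.sin (θ/2) : ℂ) * (Real.cos (θ/2) : ℂ) * (eP φ^2 + eM φ^2) * ((Bm m p : ℝ) : ℂ) * ((Bp m p : ℝ) : ℂ) * (I - I^2)) * hI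
end
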